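/- (Matrix S-lemma) Let M, N ∈ 𝕊^{n+m} with N = [[N₁₁,N₁₂],[N₁₂ᵀ,N₂₂]], N₂₂ ≺ 0 and N₁₁ - N₁₂N₂₂⁻¹N₁₂ᵀ ⪰ 0. Then [I; Z]ᵀ M [I; Z] ≻ 0 for all Z ∈ ℝ^{m×n} with [I; Z]ᵀ N [I; Z] ⪰ 0, if and only if there exists α ≥ 0 such that M - αN ≻ 0. -/

import Mathlib

open Matrix



lemma plane_core (m1 m2 b1 b2 c1 c2 a1 a2 m1' m2' γ : ℝ)
    (hγ : γ^2 ≤ 1)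
    (hrep1 : ∀ s : ℝ, s*m1 = a1 + (s*m1' - (m1' - γ))*b1 + (s*m2' - m2')*c1)
    (hrep2 : ∀ s : ℝ, s*m2 = a2 + (s*m1' - (m1' - γ))*b2 + (s*m2' - m2')*c2)
    (hmz : ¬(m1' = 0 ∧ m2' = 0)) :
    ∃ r u1 u2 : ℝ, 0 ≤ r ∧ u1^2 + u2^2 = 1 ∧
      m1 = r*(a1 + u1*b1 + u2*c1) ∧ m2 = r*(a2 + u1*b2 + u2*c2) := by
  have hApos : 0 < m1'^2 + m2'^2 := by
    rcases not_and_or.mp hmz with h | h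
    · have := pow_two_pos_of_ne_zero h; nlinarith [sq_nonneg m2']
    · have := pow_two_pos_of_ne_zero h; nlinarith [sq_nonneg m1']
  obtain ⟨sd, hsd0, hsdsq⟩ : ∃ sd : ℝ, 0 ≤ sd ∧
      sd^2 = ((m1'^2+m2'^2) - (m1'*(m1'-γ) + m2'*m2'))^2
        + (m1'^2+m2'^2)*(1-γ^2) := by
    refine ⟨Real.sqrt _, Real.sqrt_nonneg _, Real.sq_sqrt ?_⟩
    nlinarith [hApos, hγ]
  have hBsd : 0 < (m1'*(m1'-γ) + m2'*m2') + sd := by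
    nlinarith [hsdsq, hsd0, hApos, hγ]
  have hAne : (m1'^2 + m2'^2 : ℝ) ≠ 0 := ne_of_gt hApos
  have hBne : ((m1'*(m1'-γ) + m2'*m2') + sd : ℝ) ≠ 0 := ne_of_gt hBsd
  refine ⟨(m1'^2+m2'^2)/((m1'*(m1'-γ) + m2'*m2')+sd),
    (((m1'*(m1'-γ) + m2'*m2')+sd)/(m1'^2+m2'^2))*m1' - (m1'-γ),
    (((m1'*(m1'-γ) + m2'*m2')+sd)/(m1'^2+m2'^2))*m2' - m2',
    by positivity, ?_, ?_, ?_⟩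
  · field_simp
    linear_combination (m1'^2+m2'^2) * hsdsq
  · have h := hrep1 ((((m1'*(m1'-γ) + m2'*m2')+sd))/(m1'^2+m2'^2))
    rw [← h, ← mul_assoc, div_mul_div_comm, mul_comm (m1'^2+m2'^2), div_self (mul_ne_zero hBne hAne), one_mul]
  · have h := hrep2 ((((m1'*(m1'-γ) + m2'*m2')+sd))/(m1'^2+m2'^2))
    rw [← h, ← mul_assoc, div_mul_div_comm, mul_comm (m1'^2+m2'^2), div_self (mul_ne_zero hBne hAne), one_mul]

lemma plane_lemma (a1 a2 b1 b2 c1 c2 γ : ℝ) (hγ : γ^2 ≤ 1) :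
    ∃ r u1 u2 : ℝ, 0 ≤ r ∧ u1^2 + u2^2 = 1 ∧
      a1 + γ*b1 = r*(a1 + u1*b1 + u2*c1) ∧ a2 + γ*b2 = r*(a2 + u1*b2 + u2*c2) := by
  by_cases hm : a1 + γ*b1 = 0 ∧ a2 + γ*b2 = 0
  · exact ⟨0, 1, 0, le_rfl, by ring, by rw [hm.1]; ring, by rw [hm.2]; ring⟩
  by_cases hD : b1*c2 - b2*c1 = 0
  · -- b, c linearly dependent
    by_cases hb : b1 = 0 ∧ b2 = 0
    · exact ⟨1, 1, 0, zero_le_one, by ring, by rw [hb.1]; ring, by rw [hb.2]; ring⟩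
    · have hbb : 0 < b1^2 + b2^2 := by
        rcases not_and_or.mp hb with h | h
        · have := pow_two_pos_of_ne_zero h; nlinarith [sq_nonneg b2]
        · have := pow_two_pos_of_ne_zero h; nlinarith [sq_nonneg b1]
      have hc1 : c1 = ((b1*c1 + b2*c2)/(b1^2+b2^2)) * b1 := by
        field_simp
        linear_combination (-b2) * hD
      have hc2 : c2 = ((b1*c1 + b2*c2)/(b1^2+b2^2)) * b2 := by
        field_simp
        linear_combination b1 * hD
      set μ : ℝ := (b1*c1 + b2*c2)/(b1^2+b2^2) with hμ
      have hρpos : 0 < 1 + μ^2 := by positivity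
      have hρτ : 0 ≤ (1 + μ^2) - γ^2 := by nlinarith
      obtain ⟨s', hs'0, hs'sq⟩ : ∃ s' : ℝ, 0 ≤ s' ∧ s'^2 = (1 + μ^2) - γ^2 :=
        ⟨Real.sqrt _, Real.sqrt_nonneg _, Real.sq_sqrt hρτ⟩
      refine ⟨1, (γ - μ*s')/(1+μ^2), (γ*μ + s')/(1+μ^2), zero_le_one, ?_, ?_, ?_⟩
      · field_simp
        nlinarith [hs'sq]
      · rw [hc1]; field_simp; ring
      · rw [hc2]; field_simp; ring
  · -- b, c independent: Cramer coordinates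
    refine plane_core (a1 + γ*b1) (a2 + γ*b2) b1 b2 c1 c2 a1 a2
      (((a1 + γ*b1)*c2 - (a2 + γ*b2)*c1)/(b1*c2 - b2*c1))
      ((b1*(a2 + γ*b2) - b2*(a1 + γ*b1))/(b1*c2 - b2*c1))
      γ hγ ?_ ?_ ?_
    · intro s; field_simp; ring
    · intro s; field_simp; ring
    · rintro ⟨e1, e2⟩
      rw [div_eq_zero_iff] at e1 e2
      rcases e1 with e1 | e1; swap; · exact hD e1
      rcases e2 with e2 | e2; swap; · exact hD e2
      apply hm
      have k1 : (a1 + γ*b1) * (b1*c2 - b2*c1) = 0 := by linear_combination b1*e1 + c1*e2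
      have k2 : (a2 + γ*b2) * (b1*c2 - b2*c1) = 0 := by linear_combination b2*e1 + c2*e2
      exact ⟨(mul_eq_zero.mp k1).resolve_right hD, (mul_eq_zero.mp k2).resolve_right hD⟩

open Matrix

section
variable {ι : Type*} [Fintype ι]

lemma half_angle (u1 u2 : ℝ) (h : u1^2 + u2^2 = 1) :
    ∃ c s : ℝ, c^2 + s^2 = 1 ∧ c^2 - s^2 = u1 ∧ 2*c*s = u2 := by
  have hu1 : -1 ≤ u1 := by nlinarith [sq_nonneg u2]
  by_cases hc : u1 = -1
  · subst hc
    have hu2 : u2 = 0 := by nlinarith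
    exact ⟨0, 1, by ring, by ring, by rw [hu2]; ring⟩
  · have hpos : 0 < 1 + u1 := lt_of_le_of_ne (by linarith) fun h' => hc (by linarith)
    have hc2 : (Real.sqrt ((1+u1)/2))^2 = (1+u1)/2 := Real.sq_sqrt (by linarith)
    have hcpos : 0 < Real.sqrt ((1+u1)/2) := Real.sqrt_pos.mpr (by linarith)
    have hu2 : u2^2 = (1-u1)*(1+u1) := by nlinarith
    have hs2 : (u2/(2*Real.sqrt ((1+u1)/2)))^2 = (1-u1)/2 := by
      rw [div_pow, mul_pow, hc2, hu2]
      rw [div_eq_iff (by positivity)]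
      ring
    refine ⟨Real.sqrt ((1+u1)/2), u2 / (2*Real.sqrt ((1+u1)/2)), ?_, ?_, ?_⟩
    · rw [hc2, hs2]; ring
    · rw [hc2, hs2]; ring
    · field_simp

lemma quad_symm (A : Matrix ι ι ℝ) (hA : Aᵀ = A) (x y : ι → ℝ) :
    y ⬝ᵥ A *ᵥ x = x ⬝ᵥ A *ᵥ y := by
  rw [dotProduct_mulVec, ← hA, vecMul_transpose, hA, dotProduct_comm]

lemma quad_expand (A : Matrix ι ι ℝ) (hA : Aᵀ = A) (x y : ι → ℝ) (ξ η : ℝ) :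
    (ξ • x + η • y) ⬝ᵥ A *ᵥ (ξ • x + η • y)
      = ξ^2 * (x ⬝ᵥ A *ᵥ x) + 2*ξ*η*(x ⬝ᵥ A *ᵥ y) + η^2 * (y ⬝ᵥ A *ᵥ y) := by
  simp only [mulVec_add, mulVec_smul, dotProduct_add, add_dotProduct,
    dotProduct_smul, smul_dotProduct, smul_eq_mul]
  rw [quad_symm A hA x y]
  ring

/-- Dines' theorem: the joint range of two real quadratic forms is convex. -/
lemma dines_convex (A B : Matrix ι ι ℝ) (hA : Aᵀ = A) (hB : Bᵀ = B) :
    Convex ℝ {p : ℝ × ℝ | ∃ x : ι → ℝ, p = (x ⬝ᵥ A *ᵥ x, x ⬝ᵥ B *ᵥ x)} := by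
  rintro p ⟨x, rfl⟩ q ⟨y, rfl⟩ s t hs ht hst
  obtain ⟨r, u1, u2, hr, hu, e1, e2⟩ := plane_lemma
      (((x⬝ᵥA*ᵥx) + (y⬝ᵥA*ᵥy))/2) (((x⬝ᵥB*ᵥx) + (y⬝ᵥB*ᵥy))/2)
      (((x⬝ᵥA*ᵥx) - (y⬝ᵥA*ᵥy))/2) (((x⬝ᵥB*ᵥx) - (y⬝ᵥB*ᵥy))/2)
      (x⬝ᵥA*ᵥy) (x⬝ᵥB*ᵥy) (s - t) (by nlinarith)
  obtain ⟨cθ, sθ, hcs, hdiff, hprod⟩ := half_angle u1 u2 hu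
  refine ⟨(Real.sqrt r * cθ) • x + (Real.sqrt r * sθ) • y, ?_⟩
  have hξ2 : (Real.sqrt r * cθ)^2 = r * cθ^2 := by
    rw [mul_pow, Real.sq_sqrt hr]
  have hη2 : (Real.sqrt r * sθ)^2 = r * sθ^2 := by
    rw [mul_pow, Real.sq_sqrt hr]
  have hξη : (Real.sqrt r * cθ) * (Real.sqrt r * sθ) = r * (cθ*sθ) := by
    have : Real.sqrt r * Real.sqrt r = r := Real.mul_self_sqrt hr
    linear_combination cθ*sθ*this
  have key : ∀ (C : Matrix ι ι ℝ), Cᵀ = C →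
      ((((x⬝ᵥC*ᵥx) + (y⬝ᵥC*ᵥy))/2) + (s-t)*(((x⬝ᵥC*ᵥx) - (y⬝ᵥC*ᵥy))/2)
        = r*((((x⬝ᵥC*ᵥx) + (y⬝ᵥC*ᵥy))/2) + u1*(((x⬝ᵥC*ᵥx) - (y⬝ᵥC*ᵥy))/2) + u2*(x⬝ᵥC*ᵥy))) →
      ((Real.sqrt r * cθ) • x + (Real.sqrt r * sθ) • y) ⬝ᵥ C *ᵥ
        ((Real.sqrt r * cθ) • x + (Real.sqrt r * sθ) • y) = s * (x⬝ᵥC*ᵥx) + t * (y⬝ᵥC*ᵥy) := by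
    intro C hC e
    rw [quad_expand C hC, hξ2, hη2]
    have h2 : 2*(Real.sqrt r * cθ)*(Real.sqrt r * sθ) = r * u2 := by
      rw [mul_assoc, hξη]; linear_combination r*hprod
    rw [h2]
    have hc2 : cθ^2 = (1+u1)/2 := by linarith
    have hs2 : sθ^2 = (1-u1)/2 := by linarith
    rw [hc2, hs2]
    linear_combination (-1) * e - ((x⬝ᵥC*ᵥx + y⬝ᵥC*ᵥy)/2) * hst
  have eA := key A hA e1
  have eB := key B hB e2
  have : (s • ((x⬝ᵥA*ᵥx, x⬝ᵥB*ᵥx) : ℝ × ℝ) + t • (y⬝ᵥA*ᵥy, y⬝ᵥB*ᵥy))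
      = (s * (x⬝ᵥA*ᵥx) + t * (y⬝ᵥA*ᵥy), s * (x⬝ᵥB*ᵥx) + t * (y⬝ᵥB*ᵥy)) := by
    simp [Prod.ext_iff, smul_eq_mul]
  rw [this, eA, eB]

lemma dot_continuous : Continuous (fun x : ι → ℝ => x ⬝ᵥ x) := by
  show Continuous fun x : ι → ℝ => ∑ i, x i * x i
  exact continuous_finset_sum _ fun i _ => (continuous_apply i).mul (continuous_apply i)

lemma quad_continuous (A : Matrix ι ι ℝ) : Continuous (fun x : ι → ℝ => x ⬝ᵥ A *ᵥ x) := by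
  show Continuous fun x : ι → ℝ => ∑ i, x i * (∑ j, A i j * x j)
  exact continuous_finset_sum _ fun i _ => (continuous_apply i).mul
    (continuous_finset_sum _ fun j _ => continuous_const.mul (continuous_apply j))

lemma dot_self_pos {x : ι → ℝ} (hx : x ≠ 0) : 0 < x ⬝ᵥ x := by
  obtain ⟨i, hi⟩ := Function.ne_iff.mp hx
  exact Finset.sum_pos' (fun j _ => mul_self_nonneg _)
    ⟨i, Finset.mem_univ _, mul_self_pos.mpr hi⟩

lemma quad_smul (C : Matrix ι ι ℝ) (c : ℝ) (y : ι → ℝ) :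
    (c • y) ⬝ᵥ C *ᵥ (c • y) = c^2 * (y ⬝ᵥ C *ᵥ y) := by
  simp only [mulVec_smul, smul_dotProduct, dotProduct_smul, smul_eq_mul]
  ring

lemma dot_smul_self (c : ℝ) (y : ι → ℝ) : (c • y) ⬝ᵥ (c • y) = c^2 * (y ⬝ᵥ y) := by
  simp only [smul_dotProduct, dotProduct_smul, smul_eq_mul]
  ring

lemma normalize_vec (x : ι → ℝ) (hx : x ≠ 0) :
    ∃ (c : ℝ) (y : ι → ℝ), 0 < c ∧ y ⬝ᵥ y = 1 ∧ x = c • y := by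
  have hd : 0 < x ⬝ᵥ x := dot_self_pos hx
  have hc : 0 < Real.sqrt (x ⬝ᵥ x) := Real.sqrt_pos.mpr hd
  refine ⟨Real.sqrt (x ⬝ᵥ x), (Real.sqrt (x ⬝ᵥ x))⁻¹ • x, hc, ?_, ?_⟩
  · rw [dot_smul_self]
    rw [inv_pow, Real.sq_sqrt hd.le]
    field_simp
  · rw [smul_smul, mul_inv_cancel₀ hc.ne', one_smul]

lemma sphere_sub_compact (s : Set (ι → ℝ)) (hs : IsClosed s) :
    IsCompact {y : ι → ℝ | y ⬝ᵥ y = 1 ∧ y ∈ s} := by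
  apply IsCompact.of_isClosed_subset (isCompact_closedBall (0 : ι → ℝ) 1)
  · exact (isClosed_eq dot_continuous continuous_const).inter hs
  · rintro y ⟨hy1, -⟩
    rw [Metric.mem_closedBall, dist_zero_right]
    refine (pi_norm_le_iff_of_nonneg zero_le_one).mpr fun i => ?_
    rw [Real.norm_eq_abs]
    rw [abs_le_one_iff_mul_self_le_one]
    calc y i * y i ≤ ∑ j, y j * y j :=
          Finset.single_le_sum (f := fun j => y j * y j)
            (fun j _ => mul_self_nonneg _) (Finset.mem_univ i)
      _ = 1 := hy1

/-- The (nonstrict) S-lemma. -/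
lemma slemma_nonstrict (A B : Matrix ι ι ℝ) (hA : Aᵀ = A) (hB : Bᵀ = B)
    (slater : ∃ x0 : ι → ℝ, 0 < x0 ⬝ᵥ B *ᵥ x0)
    (h : ∀ x : ι → ℝ, 0 ≤ x ⬝ᵥ B *ᵥ x → 0 ≤ x ⬝ᵥ A *ᵥ x) :
    ∃ α : ℝ, 0 ≤ α ∧ ∀ x : ι → ℝ, 0 ≤ x ⬝ᵥ A *ᵥ x - α * (x ⬝ᵥ B *ᵥ x) := by
  have hWc : Convex ℝ {p : ℝ × ℝ | ∃ x : ι → ℝ, p = (x ⬝ᵥ A *ᵥ x, x ⬝ᵥ B *ᵥ x)} :=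
    dines_convex A B hA hB
  have hOc : Convex ℝ {p : ℝ × ℝ | p.1 < 0 ∧ 0 < p.2} := by
    have h1 : Convex ℝ {p : ℝ × ℝ | p.1 < 0} :=
      convex_halfSpace_lt (⟨fun _ _ => rfl, fun _ _ => by simp⟩ : IsLinearMap ℝ Prod.fst) 0
    have h2 : Convex ℝ {p : ℝ × ℝ | 0 < p.2} :=
      convex_halfSpace_gt (⟨fun _ _ => rfl, fun _ _ => by simp⟩ : IsLinearMap ℝ Prod.snd) 0
    exact h1.inter h2
  have hOo : IsOpen {p : ℝ × ℝ | p.1 < 0 ∧ 0 < p.2} :=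
    (isOpen_lt continuous_fst continuous_const).inter (isOpen_lt continuous_const continuous_snd)
  have hdisj : Disjoint {p : ℝ × ℝ | p.1 < 0 ∧ 0 < p.2}
      {p : ℝ × ℝ | ∃ x : ι → ℝ, p = (x ⬝ᵥ A *ᵥ x, x ⬝ᵥ B *ᵥ x)} := by
    rw [Set.disjoint_left]
    rintro p ⟨hp1, hp2⟩ ⟨x, rfl⟩
    exact absurd (h x hp2.le) (not_le.mpr hp1)
  obtain ⟨f, u, hfO, hfW⟩ := geometric_hahn_banach_open hOc hOo hWc hdisj
  have hlin : ∀ s t : ℝ, f (s, t) = s * f (1, 0) + t * f (0, 1) := by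
    intro s t
    have hp : ((s, t) : ℝ × ℝ) = s • ((1:ℝ), (0:ℝ)) + t • ((0:ℝ), (1:ℝ)) := by
      ext <;> simp
    rw [hp, map_add, f.map_smul, f.map_smul, smul_eq_mul, smul_eq_mul]
  set aa := f (1, 0)
  set bb := f (0, 1)
  have hu1 : u ≤ 0 := by
    have h0 : ((0:ℝ), (0:ℝ)) ∈ {p : ℝ × ℝ | ∃ x : ι → ℝ, p = (x ⬝ᵥ A *ᵥ x, x ⬝ᵥ B *ᵥ x)} :=
      ⟨0, by simp⟩
    have := hfW _ h0
    rw [hlin] at this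
    simpa using this
  have hu2 : 0 ≤ u := by
    by_contra hu
    push_neg at hu
    have h1 := hfO (-1, 1) ⟨by norm_num, by norm_num⟩
    rw [hlin] at h1
    have hba : bb - aa < 0 := by linarith [h1]
    have hε : 0 < u / (bb - aa) := div_pos_of_neg_of_neg hu hba
    have h2 := hfO (-(u / (bb - aa)), u / (bb - aa)) ⟨by simpa using hε, hε⟩
    rw [hlin] at h2
    have hne : bb - aa ≠ 0 := ne_of_lt hba
    have heq2 : -(u / (bb - aa)) * aa + u / (bb - aa) * bb = u := by
      field_simp
      ring
    linarith [h2, heq2.ge, heq2.le]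
  have hu : u = 0 := le_antisymm hu1 hu2
  subst hu
  have haa : 0 ≤ aa := by
    by_contra haa
    push_neg at haa
    have key : ∀ t : ℝ, 0 < t → (-1) * aa + t * bb < 0 := by
      intro t ht
      have := hfO (-1, t) ⟨by norm_num, ht⟩
      rw [hlin] at this
      simpa using this
    rcases le_or_gt 0 bb with hbb | hbb
    · have := key 1 one_pos
      nlinarith
    · have := key (aa / (2 * bb)) (div_pos_of_neg_of_neg haa (by linarith))
      have hbne : bb ≠ 0 := ne_of_lt hbb
      have heq : (-1) * aa + (aa / (2 * bb)) * bb = -aa/2 := by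
        field_simp
        ring
      nlinarith [this, heq]
  have hbb : bb ≤ 0 := by
    by_contra hbb
    push_neg at hbb
    have key : ∀ s : ℝ, s < 0 → s * aa + 1 * bb < 0 := by
      intro s hs
      have := hfO (s, 1) ⟨hs, one_pos⟩
      rw [hlin] at this
      simpa using this
    rcases le_or_gt aa 0 with haa2 | haa2
    · have := key (-1) (by norm_num)
      nlinarith
    · have := key (-bb / (2 * aa)) (by
        apply div_neg_of_neg_of_pos <;> linarith)
      have hane : aa ≠ 0 := ne_of_gt haa2
      have heq : (-bb / (2 * aa)) * aa + 1 * bb = bb/2 := by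
        field_simp
        ring
      nlinarith [this, heq]
  have hWside : ∀ x : ι → ℝ, 0 ≤ aa * (x ⬝ᵥ A *ᵥ x) + bb * (x ⬝ᵥ B *ᵥ x) := by
    intro x
    have := hfW _ ⟨x, rfl⟩
    rw [hlin] at this
    linarith
  rcases eq_or_lt_of_le haa with haa0 | haapos
  · exfalso
    obtain ⟨x0, hx0⟩ := slater
    have h1 := hWside x0
    rw [← haa0] at h1
    simp only [zero_mul, zero_add] at h1
    have hbb0 : bb = 0 := by
      refine le_antisymm hbb ?_
      by_contra hneg
      push_neg at hneg
      exact absurd h1 (not_le.mpr (mul_neg_of_neg_of_pos hneg hx0))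
    have := hfO (-1, 1) ⟨by norm_num, by norm_num⟩
    rw [hlin] at this
    rw [← haa0, hbb0] at this
    simp at this
  · refine ⟨-bb / aa, div_nonneg (neg_nonneg.mpr hbb) haapos.le, fun x => ?_⟩
    have heq : x ⬝ᵥ A *ᵥ x - (-bb / aa) * (x ⬝ᵥ B *ᵥ x)
        = (aa * (x ⬝ᵥ A *ᵥ x) + bb * (x ⬝ᵥ B *ᵥ x)) / aa := by
      field_simp
      ring
    rw [heq]
    exact div_nonneg (hWside x) haapos.le

/-- Strict S-lemma. -/
lemma slemma_strict (A B : Matrix ι ι ℝ) (hA : Aᵀ = A) (hB : Bᵀ = B)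
    (h : ∀ x : ι → ℝ, x ≠ 0 → 0 ≤ x ⬝ᵥ B *ᵥ x → 0 < x ⬝ᵥ A *ᵥ x) :
    ∃ α : ℝ, 0 ≤ α ∧ ∀ x : ι → ℝ, x ≠ 0 →
      0 < x ⬝ᵥ A *ᵥ x - α * (x ⬝ᵥ B *ᵥ x) := by
  classical
  by_cases htriv : ∀ x : ι → ℝ, x = 0
  · exact ⟨0, le_rfl, fun x hx => absurd (htriv x) hx⟩
  push_neg at htriv
  obtain ⟨x1, hx1⟩ := htriv
  by_cases slater : ∃ x0 : ι → ℝ, 0 < x0 ⬝ᵥ B *ᵥ x0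
  · -- Slater case: use the nonstrict S-lemma after a compactness margin
    obtain ⟨x0, hx0⟩ := slater
    have hx0ne : x0 ≠ 0 := by
      rintro rfl
      simp at hx0
    have hKcomp : IsCompact {y : ι → ℝ | y ⬝ᵥ y = 1 ∧ y ∈ {x : ι → ℝ | 0 ≤ x ⬝ᵥ B *ᵥ x}} :=
      sphere_sub_compact _ (isClosed_le continuous_const (quad_continuous B))
    have hKne : {y : ι → ℝ | y ⬝ᵥ y = 1 ∧ y ∈ {x : ι → ℝ | 0 ≤ x ⬝ᵥ B *ᵥ x}}.Nonempty := by
      obtain ⟨c, y, hc, hy1, hxy⟩ := normalize_vec x0 hx0ne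
      refine ⟨y, hy1, ?_⟩
      have : x0 ⬝ᵥ B *ᵥ x0 = c^2 * (y ⬝ᵥ B *ᵥ y) := by rw [hxy, quad_smul]
      have hypos : 0 < y ⬝ᵥ B *ᵥ y := by nlinarith [hx0, this, mul_pos hc hc]
      exact hypos.le
    obtain ⟨z, hzK, hzmin⟩ := hKcomp.exists_isMinOn hKne (quad_continuous A).continuousOn
    have hzne : z ≠ 0 := by
      rintro rfl
      simp at hzK
    have hε : 0 < z ⬝ᵥ A *ᵥ z := h z hzne hzK.2
    set ε := z ⬝ᵥ A *ᵥ z with hεdef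
    have hmargin : ∀ x : ι → ℝ, 0 ≤ x ⬝ᵥ B *ᵥ x → ε * (x ⬝ᵥ x) ≤ x ⬝ᵥ A *ᵥ x := by
      intro x hxB
      by_cases hx : x = 0
      · simp [hx]
      · obtain ⟨c, y, hc, hy1, hxy⟩ := normalize_vec x hx
        have hBxy : x ⬝ᵥ B *ᵥ x = c^2 * (y ⬝ᵥ B *ᵥ y) := by rw [hxy, quad_smul]
        have hAxy : x ⬝ᵥ A *ᵥ x = c^2 * (y ⬝ᵥ A *ᵥ y) := by rw [hxy, quad_smul]
        have hdxy : x ⬝ᵥ x = c^2 * (y ⬝ᵥ y) := by rw [hxy, dot_smul_self]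
        have hyB : 0 ≤ y ⬝ᵥ B *ᵥ y := by nlinarith [hBxy, hxB, mul_pos hc hc]
        have hyA : ε ≤ y ⬝ᵥ A *ᵥ y := isMinOn_iff.mp hzmin y ⟨hy1, hyB⟩
        rw [hAxy, hdxy, hy1]
        nlinarith [sq_nonneg c]
    have hA' : (A - ε • (1 : Matrix ι ι ℝ))ᵀ = A - ε • (1 : Matrix ι ι ℝ) := by
      rw [transpose_sub, transpose_smul, transpose_one, hA]
    have hq' : ∀ x : ι → ℝ, x ⬝ᵥ (A - ε • (1 : Matrix ι ι ℝ)) *ᵥ x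
        = x ⬝ᵥ A *ᵥ x - ε * (x ⬝ᵥ x) := by
      intro x
      rw [sub_mulVec, dotProduct_sub]
      congr 1
      rw [smul_mulVec, one_mulVec, dotProduct_smul, smul_eq_mul]
    obtain ⟨α, hα0, hαall⟩ := slemma_nonstrict (A - ε • (1 : Matrix ι ι ℝ)) B hA' hB ⟨x0, hx0⟩
      (fun x hxB => by rw [hq']; linarith [hmargin x hxB])
    refine ⟨α, hα0, fun x hxne => ?_⟩
    have := hαall x
    rw [hq'] at this
    have hd := dot_self_pos hxne
    nlinarith [this, hd, hε]
  · -- no Slater point: B ⪯ 0, take α large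
    push_neg at slater
    have hSph : IsCompact {y : ι → ℝ | y ⬝ᵥ y = 1 ∧ y ∈ (Set.univ : Set (ι → ℝ))} :=
      sphere_sub_compact _ isClosed_univ
    have hSne : {y : ι → ℝ | y ⬝ᵥ y = 1 ∧ y ∈ (Set.univ : Set (ι → ℝ))}.Nonempty := by
      obtain ⟨c, y, hc, hy1, hxy⟩ := normalize_vec x1 hx1
      exact ⟨y, hy1, Set.mem_univ _⟩
    obtain ⟨z0, hz0S, hz0min⟩ := hSph.exists_isMinOn hSne (quad_continuous A).continuousOn
    by_cases hCne : {y : ι → ℝ | y ⬝ᵥ y = 1 ∧ y ∈ {x : ι → ℝ | x ⬝ᵥ A *ᵥ x ≤ 0}}.Nonempty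
    · have hCcomp : IsCompact {y : ι → ℝ | y ⬝ᵥ y = 1 ∧ y ∈ {x : ι → ℝ | x ⬝ᵥ A *ᵥ x ≤ 0}} :=
        sphere_sub_compact _ (isClosed_le (quad_continuous A) continuous_const)
      obtain ⟨w, hwC, hwmin⟩ := hCcomp.exists_isMinOn hCne
        (quad_continuous B).neg.continuousOn
      have hwne : w ≠ 0 := by
        rintro rfl
        simp at hwC
      have hwB : w ⬝ᵥ B *ᵥ w < 0 := by
        rcases lt_or_ge (w ⬝ᵥ B *ᵥ w) 0 with hlt | hge
        · exact hlt
        · exact absurd (h w hwne hge) (not_lt.mpr hwC.2)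
      set δ := -(w ⬝ᵥ B *ᵥ w) with hδdef
      have hδpos : 0 < δ := by rw [hδdef]; linarith
      set m0 := z0 ⬝ᵥ A *ᵥ z0 with hm0
      set α := (1 + max 0 (-m0)) / δ with hα
      have hα0 : 0 ≤ α := by
        apply div_nonneg _ hδpos.le
        nlinarith [le_max_left 0 (-m0)]
      have hαδ : α * δ = 1 + max 0 (-m0) := by
        rw [hα]
        field_simp
      have hsphere : ∀ y : ι → ℝ, y ⬝ᵥ y = 1 → 0 < y ⬝ᵥ A *ᵥ y - α * (y ⬝ᵥ B *ᵥ y) := by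
        intro y hy1
        by_cases hyC : y ⬝ᵥ A *ᵥ y ≤ 0
        · have hyδ : δ ≤ -(y ⬝ᵥ B *ᵥ y) := isMinOn_iff.mp hwmin y ⟨hy1, hyC⟩
          have hym : m0 ≤ y ⬝ᵥ A *ᵥ y := isMinOn_iff.mp hz0min y ⟨hy1, Set.mem_univ _⟩
          have hmax := le_max_right 0 (-m0)
          have hprod : α * δ ≤ α * (-(y ⬝ᵥ B *ᵥ y)) := mul_le_mul_of_nonneg_left hyδ hα0
          nlinarith [hαδ, hym, hmax, hprod]
        · push_neg at hyC
          have hyB : y ⬝ᵥ B *ᵥ y ≤ 0 := slater y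
          nlinarith [mul_nonneg hα0 (neg_nonneg.mpr hyB)]
      refine ⟨α, hα0, fun x hxne => ?_⟩
      obtain ⟨c, y, hc, hy1, hxy⟩ := normalize_vec x hxne
      have hAxy : x ⬝ᵥ A *ᵥ x = c^2 * (y ⬝ᵥ A *ᵥ y) := by rw [hxy, quad_smul]
      have hBxy : x ⬝ᵥ B *ᵥ x = c^2 * (y ⬝ᵥ B *ᵥ y) := by rw [hxy, quad_smul]
      have hs := hsphere y hy1
      have hcpos : 0 < c^2 := by positivity
      nlinarith [hs, hcpos]
    · -- α = 0 works
      refine ⟨0, le_rfl, fun x hxne => ?_⟩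
      obtain ⟨c, y, hc, hy1, hxy⟩ := normalize_vec x hxne
      have hyne : y ≠ 0 := by
        rintro rfl
        simp at hy1
      have hyA : 0 < y ⬝ᵥ A *ᵥ y := by
        by_contra hneg
        push_neg at hneg
        exact hCne ⟨y, hy1, hneg⟩
      have hAxy : x ⬝ᵥ A *ᵥ x = c^2 * (y ⬝ᵥ A *ᵥ y) := by rw [hxy, quad_smul]
      have hcpos : 0 < c^2 := by positivity
      nlinarith [hAxy, hyA, hcpos]

end

section glue
variable {p q : Type*} [Fintype p] [Fintype q] [DecidableEq p] [DecidableEq q]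

lemma star_id (x : p → ℝ) : star x = x := rfl

lemma conj_dot (P : Matrix p p ℝ) (Bm : Matrix p q ℝ) (u : q → ℝ) :
    u ⬝ᵥ (Bmᵀ * P * Bm) *ᵥ u = (Bm *ᵥ u) ⬝ᵥ P *ᵥ (Bm *ᵥ u) := by
  rw [← mulVec_mulVec, ← mulVec_mulVec, dotProduct_mulVec, vecMul_transpose]

lemma conj_symm (P : Matrix p p ℝ) (hP : Pᵀ = P) (Bm : Matrix p q ℝ) :
    (Bmᵀ * P * Bm)ᵀ = Bmᵀ * P * Bm := by
  rw [transpose_mul, transpose_mul, transpose_transpose, hP, Matrix.mul_assoc]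

lemma isHermitian_of_symm (P : Matrix p p ℝ) (h : Pᵀ = P) : P.IsHermitian := by
  have : Pᴴ = Pᵀ := by
    ext i j
    simp [conjTranspose_apply]
  rw [IsHermitian, this, h]

lemma vecMulVec_mulVec' (w : q → ℝ) (a : p → ℝ) (y : p → ℝ) :
    vecMulVec w a *ᵥ y = (a ⬝ᵥ y) • w := by
  ext i
  simp only [mulVec, vecMulVec_apply, dotProduct, Pi.smul_apply, smul_eq_mul,
    Finset.sum_mul, Finset.mul_sum]
  apply Finset.sum_congr rfl
  intros
  ring

lemma psd_cs (S : Matrix p p ℝ) (hS : Sᵀ = S) (hpsd : ∀ x, 0 ≤ x ⬝ᵥ S *ᵥ x) (u y : p → ℝ) :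
    ((S *ᵥ u) ⬝ᵥ y)^2 ≤ (y ⬝ᵥ S *ᵥ y) * (u ⬝ᵥ S *ᵥ u) := by
  have key : ∀ t : ℝ, 0 ≤ (u ⬝ᵥ S *ᵥ u) * (t*t) + (2 * ((S *ᵥ u) ⬝ᵥ y)) * t
      + (y ⬝ᵥ S *ᵥ y) := by
    intro t
    have h := hpsd ((1:ℝ) • y + t • u)
    rw [quad_expand S hS y u 1 t] at h
    have hc : (S *ᵥ u) ⬝ᵥ y = y ⬝ᵥ S *ᵥ u := dotProduct_comm _ _
    have e : (u ⬝ᵥ S *ᵥ u) * (t*t) + (2 * ((S *ᵥ u) ⬝ᵥ y)) * t + (y ⬝ᵥ S *ᵥ y)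
        = 1^2 * (y ⬝ᵥ S *ᵥ y) + 2*1*t*(y ⬝ᵥ S *ᵥ u) + t^2 * (u ⬝ᵥ S *ᵥ u) := by
      rw [hc]; ring
    rw [e]
    exact h
  have hd := discrim_le_zero key
  rw [discrim] at hd
  nlinarith [hd]

/-- Completion-of-squares, matrix version. -/
lemma schur_key (N11 : Matrix p p ℝ) (N12 : Matrix p q ℝ) (N22 : Matrix q q ℝ)
    (hN22symm : N22.IsSymm) (hd : IsUnit N22.det) (Z : Matrix q p ℝ) :
    (fromRows (1 : Matrix p p ℝ) Z)ᵀ * fromBlocks N11 N12 N12ᵀ N22 * fromRows (1 : Matrix p p ℝ) Z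
      = (N11 - N12*N22⁻¹*N12ᵀ)
        + (Z + N22⁻¹*N12ᵀ)ᵀ * N22 * (Z + N22⁻¹*N12ᵀ) := by
  have hinv : N22 * N22⁻¹ = 1 := mul_nonsing_inv _ hd
  have hinv' : N22⁻¹ * N22 = 1 := nonsing_inv_mul _ hd
  have hivT : (N22⁻¹)ᵀ = N22⁻¹ := by
    rw [transpose_nonsing_inv, hN22symm.eq]
  have hET : (Z + N22⁻¹*N12ᵀ)ᵀ = Zᵀ + N12*N22⁻¹ := by
    rw [transpose_add, transpose_mul, transpose_transpose, hivT]
  rw [Matrix.mul_assoc, fromBlocks_mul_fromRows, transpose_fromRows, transpose_one,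
    fromCols_mul_fromRows, hET]
  have e1 : (Zᵀ + N12*N22⁻¹) * N22 * (Z + N22⁻¹*N12ᵀ)
      = Zᵀ*(N22*Z) + Zᵀ*N12ᵀ + N12*Z + N12*(N22⁻¹*N12ᵀ) := by
    rw [Matrix.add_mul, Matrix.add_mul, Matrix.mul_add, Matrix.mul_add]
    rw [Matrix.mul_assoc N12 N22⁻¹ N22, hinv', Matrix.mul_one]
    rw [Matrix.mul_assoc Zᵀ N22 (N22⁻¹*N12ᵀ), ← Matrix.mul_assoc N22 N22⁻¹ N12ᵀ,
      hinv, Matrix.one_mul]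
    rw [Matrix.mul_assoc Zᵀ N22 Z]
    abel
  rw [e1]
  simp only [Matrix.one_mul, Matrix.mul_one, Matrix.mul_add]
  rw [← Matrix.mul_assoc N12 N22⁻¹ N12ᵀ]
  abel

/-- Completion-of-squares, vector version. -/
lemma vec_split (N11 : Matrix p p ℝ) (N12 : Matrix p q ℝ) (N22 : Matrix q q ℝ)
    (hN22symm : N22.IsSymm) (hd : IsUnit N22.det) (u : p → ℝ) (v : q → ℝ) :
    (Sum.elim u v) ⬝ᵥ (fromBlocks N11 N12 N12ᵀ N22) *ᵥ (Sum.elim u v)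
      = u ⬝ᵥ (N11 - N12*N22⁻¹*N12ᵀ) *ᵥ u
        + (v + (N22⁻¹*N12ᵀ) *ᵥ u) ⬝ᵥ N22 *ᵥ (v + (N22⁻¹*N12ᵀ) *ᵥ u) := by
  have hinv : N22 * N22⁻¹ = 1 := mul_nonsing_inv _ hd
  have f1 : v ⬝ᵥ N12ᵀ *ᵥ u = u ⬝ᵥ N12 *ᵥ v := by
    rw [dotProduct_mulVec, vecMul_transpose, dotProduct_comm]
  have f2 : v ⬝ᵥ N22 *ᵥ ((N22⁻¹*N12ᵀ) *ᵥ u) = v ⬝ᵥ N12ᵀ *ᵥ u := by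
    rw [mulVec_mulVec, ← Matrix.mul_assoc, hinv, Matrix.one_mul]
  have f3 : ((N22⁻¹*N12ᵀ) *ᵥ u) ⬝ᵥ N22 *ᵥ v = v ⬝ᵥ N22 *ᵥ ((N22⁻¹*N12ᵀ) *ᵥ u) :=
    quad_symm N22 hN22symm.eq _ _
  have f4 : ((N22⁻¹*N12ᵀ) *ᵥ u) ⬝ᵥ N22 *ᵥ ((N22⁻¹*N12ᵀ) *ᵥ u)
      = u ⬝ᵥ (N12*N22⁻¹*N12ᵀ) *ᵥ u := by
    have e : N22 *ᵥ ((N22⁻¹*N12ᵀ) *ᵥ u) = N12ᵀ *ᵥ u := by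
      rw [mulVec_mulVec, ← Matrix.mul_assoc, hinv, Matrix.one_mul]
    rw [e, dotProduct_mulVec, vecMul_transpose, dotProduct_comm, mulVec_mulVec,
      ← Matrix.mul_assoc]
  simp only [fromBlocks_mulVec, Sum.elim_comp_inl, Sum.elim_comp_inr,
    sumElim_dotProduct_sumElim, dotProduct_add, add_dotProduct, mulVec_add,
    sub_mulVec, dotProduct_sub]
  linarith [f1, f2, f3, f4]

lemma scalar_ineq (Y d q t : ℝ) (hY : 0 ≤ Y) (hd : 0 < d) (hq : q^2 ≤ Y*d)
    (ht0 : t ≤ 0) (htlow : -d ≤ t) : 0 ≤ Y + (d⁻¹*q)^2 * t := by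
  have hdne : d ≠ 0 := ne_of_gt hd
  have heq : Y + (d⁻¹*q)^2*t = (Y*(d*d) + q^2*t)/(d*d) := by
    field_simp
  rw [heq]
  apply div_nonneg _ (mul_pos hd hd).le
  nlinarith [mul_nonneg (sub_nonneg.mpr hq) (neg_nonneg.mpr ht0),
    mul_nonneg (mul_nonneg hY hd.le) (by linarith : (0:ℝ) ≤ t + d)]

end glue


/-- Matrix S-lemma: with `N₂₂ ≺ 0` and `N₁₁ - N₁₂ N₂₂⁻¹ N₁₂ᵀ ⪰ 0`, we have
`[I; Z]ᵀ M [I; Z] ≻ 0` for all `Z` with `[I; Z]ᵀ N [I; Z] ⪰ 0` iff there is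
`α ≥ 0` with `M - αN ≻ 0`. -/
theorem stmt11 {n m : ℕ}
    (M : Matrix (Fin n ⊕ Fin m) (Fin n ⊕ Fin m) ℝ) (hMsymm : M.IsSymm)
    (N11 : Matrix (Fin n) (Fin n) ℝ) (N12 : Matrix (Fin n) (Fin m) ℝ)
    (N22 : Matrix (Fin m) (Fin m) ℝ)
    (hN11symm : N11.IsSymm) (hN22symm : N22.IsSymm)
    (hN22 : (-N22).PosDef)
    (hSchur : (N11 - N12 * N22⁻¹ * N12ᵀ).PosSemidef) :
    (∀ Z : Matrix (Fin m) (Fin n) ℝ,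
        ((fromRows (1 : Matrix (Fin n) (Fin n) ℝ) Z)ᵀ *
          fromBlocks N11 N12 N12ᵀ N22 *
          fromRows (1 : Matrix (Fin n) (Fin n) ℝ) Z).PosSemidef →
        ((fromRows (1 : Matrix (Fin n) (Fin n) ℝ) Z)ᵀ * M *
          fromRows (1 : Matrix (Fin n) (Fin n) ℝ) Z).PosDef) ↔
      (∃ α : ℝ, 0 ≤ α ∧ (M - α • fromBlocks N11 N12 N12ᵀ N22).PosDef) := by
  classical
  set N := fromBlocks N11 N12 N12ᵀ N22 with hNdef
  have hN22d : IsUnit N22.det := by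
    have hdp := hN22.det_pos
    rw [det_neg] at hdp
    refine isUnit_iff_ne_zero.mpr fun h0 => ?_
    rw [h0, mul_zero] at hdp
    exact lt_irrefl 0 hdp
  have hNsym : Nᵀ = N := by
    rw [hNdef, fromBlocks_transpose, transpose_transpose, hN11symm.eq, hN22symm.eq]
  have hMsym : Mᵀ = M := hMsymm.eq
  have hSsym : (N11 - N12 * N22⁻¹ * N12ᵀ)ᵀ = N11 - N12 * N22⁻¹ * N12ᵀ := by
    have h := hSchur.1
    have h2 : (N11 - N12 * N22⁻¹ * N12ᵀ)ᴴ = (N11 - N12 * N22⁻¹ * N12ᵀ)ᵀ := by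
      ext i j
      simp [conjTranspose_apply]
    rw [← h2, h]
  have hSpsd : ∀ x : Fin n → ℝ, 0 ≤ x ⬝ᵥ (N11 - N12 * N22⁻¹ * N12ᵀ) *ᵥ x := by
    intro x
    have h := hSchur.dotProduct_mulVec_nonneg x
    rwa [star_id] at h
  have hTneg : ∀ w : Fin m → ℝ, w ≠ 0 → w ⬝ᵥ N22 *ᵥ w < 0 := by
    intro w hw
    have h := hN22.dotProduct_mulVec_pos hw
    rw [star_id, neg_mulVec, dotProduct_neg] at h
    linarith
  have hTnpos : ∀ w : Fin m → ℝ, w ⬝ᵥ N22 *ᵥ w ≤ 0 := by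
    intro w
    by_cases hw : w = 0
    · simp [hw]
    · exact (hTneg w hw).le
  constructor
  · -- forward (hard) direction
    intro hyp
    have h1 : ∀ x : (Fin n ⊕ Fin m) → ℝ, x ≠ 0 → 0 ≤ x ⬝ᵥ N *ᵥ x → 0 < x ⬝ᵥ M *ᵥ x := by
      intro x hx hxN
      set u : Fin n → ℝ := x ∘ Sum.inl with hu
      set v : Fin m → ℝ := x ∘ Sum.inr with hv
      have hxe : x = Sum.elim u v := by
        funext i
        cases i <;> rfl
      have hsplit := vec_split N11 N12 N22 hN22symm hN22d u v
      rw [← hxe, ← hNdef] at hsplit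
      by_cases hu0 : u = 0
      · exfalso
        rw [hu0] at hsplit
        simp only [zero_dotProduct, dotProduct_zero, mulVec_zero, add_zero, zero_add] at hsplit
        have hvne : v ≠ 0 := by
          intro h0
          apply hx
          rw [hxe, hu0, h0]
          funext i
          cases i <;> rfl
        linarith [hTneg v hvne, hxN, hsplit.le, hsplit.ge]
      · -- u ≠ 0
        have eval : ∀ Z : Matrix (Fin m) (Fin n) ℝ, Z *ᵥ u = v →
            ((fromRows (1 : Matrix (Fin n) (Fin n) ℝ) Z)ᵀ * M * fromRows (1 : Matrix (Fin n) (Fin n) ℝ) Z).PosDef → 0 < x ⬝ᵥ M *ᵥ x := by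
          intro Z hZu hPD
          have h2 := hPD.dotProduct_mulVec_pos hu0
          rw [star_id, conj_dot] at h2
          have hxx : fromRows 1 Z *ᵥ u = x := by
            rw [fromRows_mulVec, one_mulVec, hZu]
            exact hxe.symm
          rwa [hxx] at h2
        have hwT : (v + (N22⁻¹ * N12ᵀ) *ᵥ u) ⬝ᵥ N22 *ᵥ (v + (N22⁻¹ * N12ᵀ) *ᵥ u) ≤ 0 :=
          hTnpos _
        rcases eq_or_lt_of_le (hSpsd u) with hsu0 | hsupos
        · -- degenerate: u S u = 0, so w = 0 and Z = -(N22⁻¹ N12ᵀ) works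
          have hw0 : v + (N22⁻¹ * N12ᵀ) *ᵥ u = 0 := by
            by_contra hwne
            have := hTneg _ hwne
            linarith [hxN, hsplit.le, hsplit.ge, hsu0.le, hsu0.ge]
          have hveq : (-(N22⁻¹ * N12ᵀ)) *ᵥ u = v := by
            rw [neg_mulVec]
            exact (eq_neg_of_add_eq_zero_left hw0).symm
          refine eval _ hveq (hyp _ ?_)
          rw [hNdef, schur_key N11 N12 N22 hN22symm hN22d]
          rw [neg_add_cancel, transpose_zero, Matrix.zero_mul, Matrix.mul_zero, add_zero]
          exact hSchur
        · -- u S u > 0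
          have hdne : u ⬝ᵥ (N11 - N12 * N22⁻¹ * N12ᵀ) *ᵥ u ≠ 0 := ne_of_gt hsupos
          set Δ : Matrix (Fin m) (Fin n) ℝ :=
            (u ⬝ᵥ (N11 - N12 * N22⁻¹ * N12ᵀ) *ᵥ u)⁻¹ •
              vecMulVec (v + (N22⁻¹ * N12ᵀ) *ᵥ u) ((N11 - N12 * N22⁻¹ * N12ᵀ) *ᵥ u)
            with hΔdef
          have hΔu : Δ *ᵥ u = v + (N22⁻¹ * N12ᵀ) *ᵥ u := by
            rw [hΔdef, smul_mulVec, vecMulVec_mulVec',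
              dotProduct_comm ((N11 - N12 * N22⁻¹ * N12ᵀ) *ᵥ u) u,
              smul_smul, inv_mul_cancel₀ hdne, one_smul]
          have hZu : (Δ - N22⁻¹ * N12ᵀ) *ᵥ u = v := by
            rw [sub_mulVec, hΔu, add_sub_cancel_right]
          refine eval _ hZu (hyp _ ?_)
          rw [hNdef, schur_key N11 N12 N22 hN22symm hN22d, sub_add_cancel]
          refine PosSemidef.of_dotProduct_mulVec_nonneg ?_ ?_
          · apply isHermitian_of_symm
            rw [transpose_add, hSsym, conj_symm N22 hN22symm.eq Δ]
          · intro y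
            rw [star_id, add_mulVec, dotProduct_add, conj_dot]
            have hΔy : Δ *ᵥ y
                = ((u ⬝ᵥ (N11 - N12 * N22⁻¹ * N12ᵀ) *ᵥ u)⁻¹ *
                    (((N11 - N12 * N22⁻¹ * N12ᵀ) *ᵥ u) ⬝ᵥ y)) •
                  (v + (N22⁻¹ * N12ᵀ) *ᵥ u) := by
              rw [hΔdef, smul_mulVec, vecMulVec_mulVec', smul_smul]
            rw [hΔy, quad_smul]
            have hY : 0 ≤ y ⬝ᵥ (N11 - N12 * N22⁻¹ * N12ᵀ) *ᵥ y := hSpsd y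
            have hq := psd_cs (N11 - N12 * N22⁻¹ * N12ᵀ) hSsym hSpsd u y
            have hwlow : -(u ⬝ᵥ (N11 - N12 * N22⁻¹ * N12ᵀ) *ᵥ u)
                ≤ (v + (N22⁻¹ * N12ᵀ) *ᵥ u) ⬝ᵥ N22 *ᵥ (v + (N22⁻¹ * N12ᵀ) *ᵥ u) := by
              linarith [hxN, hsplit.le, hsplit.ge]
            exact scalar_ineq _ _ _ _ hY hsupos hq hwT hwlow
    obtain ⟨α, hα0, hα⟩ := slemma_strict M N hMsym hNsym h1
    refine ⟨α, hα0, PosDef.of_dotProduct_mulVec_pos ?_ ?_⟩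
    · apply isHermitian_of_symm
      rw [transpose_sub, transpose_smul, hMsym, hNsym]
    · intro xx hxx
      rw [star_id, sub_mulVec, smul_mulVec, dotProduct_sub, dotProduct_smul,
        smul_eq_mul]
      exact hα xx hxx
  · -- easy direction
    rintro ⟨α, hα0, hpd⟩ Z hZpsd
    refine PosDef.of_dotProduct_mulVec_pos (isHermitian_of_symm _ (conj_symm M hMsym _)) ?_
    intro uu huu
    rw [star_id, conj_dot]
    have hxxne : fromRows (1 : Matrix (Fin n) (Fin n) ℝ) Z *ᵥ uu ≠ 0 := by
      rw [fromRows_mulVec, one_mulVec]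
      intro h0
      apply huu
      funext i
      exact congrFun h0 (Sum.inl i)
    have h2 := hpd.dotProduct_mulVec_pos hxxne
    rw [star_id, sub_mulVec, smul_mulVec, dotProduct_sub, dotProduct_smul,
      smul_eq_mul] at h2
    have h3 := hZpsd.dotProduct_mulVec_nonneg uu
    rw [star_id, conj_dot] at h3
    nlinarith [h2, h3, mul_nonneg hα0 h3]
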